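/- Let 0 < ρ < 1 and c ≥ 0. Define ψ(λ) = (1/((c+1)B(1-ρ,ρ))) ∫₀¹ u^{-ρ}(1-u)^{ρ-1} φ(λu) du where φ(λ) = 1 - (λ/(λ+1))^ρ. Then ψ(λ) = (1/(c+1))·(1 - I_{λ/(λ+1)}(ρ, 1-ρ)), where I_x(a,b) = B_x(a,b)/B(a,b) is the regularized incomplete Beta function with B_x(a,b) = ∫₀^x t^{a-1}(1-t)^{b-1} dt. -/
import Mathlib


open Real MeasureTheory Filter Set

noncomputable def Beta (a b : ℝ) : ℝ := ∫ t in (0:ℝ)..1, t ^ (a - 1) * (1 - t) ^ (b - 1)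

/-- Incomplete Beta function B_x(a,b) = ∫₀^x t^{a-1}(1-t)^{b-1} dt. -/
noncomputable def incBeta (a b x : ℝ) : ℝ := ∫ t in (0:ℝ)..x, t ^ (a - 1) * (1 - t) ^ (b - 1)

/-- Regularized incomplete Beta function I_x(a,b) = B_x(a,b)/B(a,b). -/
noncomputable def regIncBeta (a b x : ℝ) : ℝ := incBeta a b x / Beta a b

-- Auxiliary: integrability of the Beta integrand on the left half interval.
lemma betaIntLeft {a b : ℝ} (ha : 0 < a) :
    IntervalIntegrable (fun x : ℝ => x ^ (a - 1) * (1 - x) ^ (b - 1)) volume 0 (1/2) := by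
  apply IntervalIntegrable.mul_continuousOn
  · exact intervalIntegral.intervalIntegrable_rpow' (by linarith)
  · apply ContinuousOn.rpow_const (by fun_prop)
    intro x hx
    rw [uIcc_of_le (by norm_num : (0:ℝ) ≤ 1/2)] at hx
    left
    have : x ≤ 1/2 := hx.2
    intro h; nlinarith [h]

-- Auxiliary: integrability of the Beta integrand on [0,1].
lemma betaIntegrable {a b : ℝ} (ha : 0 < a) (hb : 0 < b) :
    IntervalIntegrable (fun x : ℝ => x ^ (a - 1) * (1 - x) ^ (b - 1)) volume 0 1 := by
  refine (betaIntLeft ha).trans ?_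
  have h2 := ((betaIntLeft (b := a) hb).comp_sub_left 1).symm
  have he : (fun x : ℝ => (1 - x) ^ (b - 1) * (1 - (1 - x)) ^ (a - 1))
      = fun x : ℝ => x ^ (a - 1) * (1 - x) ^ (b - 1) := by
    funext x; rw [sub_sub_cancel, mul_comm]
  rw [he] at h2
  norm_num at h2
  exact h2

-- Auxiliary: pointwise identity for the substitution t = l(1-u)/(l+1).
lemma ptwise (ρ l : ℝ) (hρ : 0 < ρ) (hρ1 : ρ < 1) (hl : 0 < l)
    {u : ℝ} (hu : 0 < u) (hu1 : u ≤ 1) :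
    u ^ (-ρ) * (1 - u) ^ (ρ - 1) * ((l * u) / (l * u + 1)) ^ ρ
      = (l / (l + 1)) * ((-(l / (l + 1)) * u + l / (l + 1)) ^ (ρ - 1)
          * (1 - (-(l / (l + 1)) * u + l / (l + 1))) ^ (-ρ)) := by
  have hl1 : (0:ℝ) < l + 1 := by linarith
  set x := l / (l + 1) with hxdef
  have hx : 0 < x := div_pos hl hl1
  have hlu : (0:ℝ) < l * u + 1 := by nlinarith
  have h1u : (0:ℝ) ≤ 1 - u := by linarith
  have e1 : -x * u + x = x * (1 - u) := by ring
  have hxl' : x * (l + 1) = l := by rw [hxdef]; field_simp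
  have e2 : 1 - x * (1 - u) = (l * u + 1) / (l + 1) := by
    rw [eq_div_iff hl1.ne']; linear_combination (u - 1) * hxl'
  rw [e1, e2]
  have L : u ^ (-ρ) * (1 - u) ^ (ρ - 1) * ((l * u) / (l * u + 1)) ^ ρ
      = (1 - u) ^ (ρ - 1) * (l ^ ρ / (l * u + 1) ^ ρ) := by
    rw [Real.div_rpow (by positivity) hlu.le, Real.mul_rpow hl.le hu.le]
    have : u ^ (-ρ) * u ^ ρ = 1 := by
      rw [← Real.rpow_add hu, neg_add_cancel, Real.rpow_zero]
    calc u ^ (-ρ) * (1 - u) ^ (ρ - 1) * (l ^ ρ * u ^ ρ / (l * u + 1) ^ ρ)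
        = (u ^ (-ρ) * u ^ ρ) * ((1 - u) ^ (ρ - 1) * (l ^ ρ / (l * u + 1) ^ ρ)) := by ring
      _ = (1 - u) ^ (ρ - 1) * (l ^ ρ / (l * u + 1) ^ ρ) := by rw [this, one_mul]
  rw [L]
  rw [Real.mul_rpow hx.le h1u,
    Real.rpow_neg (by positivity), Real.div_rpow hlu.le hl1.le]
  have hxρ : x * x ^ (ρ - 1) = x ^ ρ := by
    nth_rewrite 1 [← Real.rpow_one x]
    rw [← Real.rpow_add hx]; ring_nf
  have hxl : x ^ ρ * (l + 1) ^ ρ = l ^ ρ := by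
    rw [← Real.mul_rpow hx.le hl1.le, hxdef, div_mul_cancel₀ _ hl1.ne']
  field_simp
  linear_combination (-(1 - u) ^ (ρ - 1) * (l + 1) ^ ρ) * hxρ + (-(1 - u) ^ (ρ - 1)) * hxl

-- Auxiliary: the substitution identity for the mixed integral (l > 0 case).
lemma keySubst (ρ l : ℝ) (hρ : 0 < ρ) (hρ1 : ρ < 1) (hl : 0 < l) :
    (∫ u in (0:ℝ)..1, u ^ (-ρ) * (1 - u) ^ (ρ - 1) * ((l * u) / (l * u + 1)) ^ ρ)
      = ∫ t in (0:ℝ)..(l / (l + 1)), t ^ (ρ - 1) * (1 - t) ^ (-ρ) := by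
  have hl1 : (0:ℝ) < l + 1 := by linarith
  set x := l / (l + 1) with hxdef
  have hx : 0 < x := div_pos hl hl1
  set g : ℝ → ℝ := fun t => t ^ (ρ - 1) * (1 - t) ^ (-ρ) with hg
  have step1 : (∫ u in (0:ℝ)..1, u ^ (-ρ) * (1 - u) ^ (ρ - 1) * ((l * u) / (l * u + 1)) ^ ρ)
      = ∫ u in (0:ℝ)..1, x * g (-x * u + x) := by
    apply intervalIntegral.integral_congr_ae
    filter_upwards with u hu
    rw [uIoc_of_le (by norm_num : (0:ℝ) ≤ 1)] at hu
    exact ptwise ρ l hρ hρ1 hl hu.1 hu.2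
  have step2 : (∫ u in (0:ℝ)..1, g (-x * u + x)) = (-x)⁻¹ • ∫ t in (-x*0 + x)..(-x*1 + x), g t :=
    intervalIntegral.integral_comp_mul_add g (by simpa using hx.ne') x
  rw [step1, intervalIntegral.integral_const_mul, step2]
  have e0 : -x * 0 + x = x := by ring
  have e1 : -x * 1 + x = 0 := by ring
  rw [e0, e1, intervalIntegral.integral_symm, smul_eq_mul]
  field_simp

/-- mixing φ(λu) = 1 - (λu/(λu+1))^ρ over the Beta(1-ρ,ρ) density gives
(1/(c+1))(1 - I_{λ/(λ+1)}(ρ, 1-ρ)). -/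
theorem stmt9 (ρ c : ℝ) (hρ : 0 < ρ) (hρ1 : ρ < 1) (hc : 0 ≤ c)
    (φ ψ : ℝ → ℝ)
    (hφ : ∀ l : ℝ, φ l = 1 - (l / (l + 1)) ^ ρ)
    (hψ : ∀ l : ℝ, ψ l = (1 / ((c + 1) * Beta (1 - ρ) ρ)) *
      ∫ u in (0:ℝ)..1, u ^ (-ρ) * (1 - u) ^ (ρ - 1) * φ (l * u)) :
    ∀ l : ℝ, 0 ≤ l → ψ l = (1 / (c + 1)) * (1 - regIncBeta ρ (1 - ρ) (l / (l + 1))) := by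
  intro l hl
  have hρ' : (0:ℝ) < 1 - ρ := by linarith
  have hexp : (1 - ρ) - 1 = -ρ := by ring
  -- integrability of the Beta(1-ρ,ρ) density
  have hInt : IntervalIntegrable (fun u : ℝ => u ^ (-ρ) * (1 - u) ^ (ρ - 1)) volume 0 1 := by
    have := betaIntegrable (a := 1 - ρ) (b := ρ) hρ' hρ
    simpa [hexp] using this
  -- Beta (1-ρ) ρ as an integral with the simplified exponent
  have hBval : Beta (1 - ρ) ρ = ∫ u in (0:ℝ)..1, u ^ (-ρ) * (1 - u) ^ (ρ - 1) := by
    rw [Beta, hexp]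
  -- positivity of Beta (1-ρ) ρ
  have hBpos : 0 < Beta (1 - ρ) ρ := by
    rw [hBval]
    apply intervalIntegral.intervalIntegral_pos_of_pos_on (by simpa [hexp] using hInt)
    · intro x hx
      have hx0 : 0 < x := hx.1
      have hx1 : 0 < 1 - x := by linarith [hx.2]
      positivity
    · norm_num
  -- symmetry of Beta
  have hBsymm : Beta ρ (1 - ρ) = Beta (1 - ρ) ρ := by
    rw [hBval, Beta, hexp]
    have := intervalIntegral.integral_comp_sub_left
      (fun t : ℝ => t ^ (ρ - 1) * (1 - t) ^ (-ρ)) 1 (a := 0) (b := 1)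
    norm_num at this
    rw [← this]
    apply intervalIntegral.integral_congr
    intro u _
    simp only [sub_sub_cancel]
    ring
  -- continuity of the multiplier
  have hcont : ContinuousOn (fun u : ℝ => ((l * u) / (l * u + 1)) ^ ρ) (uIcc 0 1) := by
    apply ContinuousOn.rpow_const
    · apply ContinuousOn.div (by fun_prop) (by fun_prop)
      intro u hu
      rw [uIcc_of_le (by norm_num : (0:ℝ) ≤ 1)] at hu
      have : 0 ≤ l * u := mul_nonneg hl hu.1
      positivity
    · exact fun _ _ => Or.inr hρ.le
  have hInt2 : IntervalIntegrable
      (fun u : ℝ => u ^ (-ρ) * (1 - u) ^ (ρ - 1) * ((l * u) / (l * u + 1)) ^ ρ) volume 0 1 :=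
    hInt.mul_continuousOn hcont
  -- key evaluation of the mixed part
  have hkey : (∫ u in (0:ℝ)..1, u ^ (-ρ) * (1 - u) ^ (ρ - 1) * ((l * u) / (l * u + 1)) ^ ρ)
      = incBeta ρ (1 - ρ) (l / (l + 1)) := by
    rcases hl.eq_or_lt with h0 | hlpos
    · subst h0
      simp [incBeta, Real.zero_rpow hρ.ne']
    · rw [keySubst ρ l hρ hρ1 hlpos, incBeta, hexp]
  -- main computation
  have hsplit : (∫ u in (0:ℝ)..1, u ^ (-ρ) * (1 - u) ^ (ρ - 1) * φ (l * u))
      = Beta (1 - ρ) ρ - incBeta ρ (1 - ρ) (l / (l + 1)) := by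
    have : (∫ u in (0:ℝ)..1, u ^ (-ρ) * (1 - u) ^ (ρ - 1) * φ (l * u))
        = ∫ u in (0:ℝ)..1, (u ^ (-ρ) * (1 - u) ^ (ρ - 1)
            - u ^ (-ρ) * (1 - u) ^ (ρ - 1) * ((l * u) / (l * u + 1)) ^ ρ) := by
      apply intervalIntegral.integral_congr
      intro u _
      simp only
      rw [hφ (l * u)]
      ring
    rw [this, intervalIntegral.integral_sub hInt hInt2, ← hBval, hkey]
  rw [hψ l, hsplit, regIncBeta, hBsymm]
  have hc1 : (0:ℝ) < c + 1 := by linarith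
  field_simp
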